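/- In the ring R = Q[D_{-m}, ..., D_n]/(M + L) defined above, the product (m+n-1)! * D_0^{m+n-1} equals A(m+n-1, m-1) * D_{-m+1} D_{-m+2} ... D_{-1} D_0 D_1 ... D_{n-1}. -/

import Mathlib

open MvPolynomial
open Fin.NatCast
open Finset

/-- Eulerian numbers. -/
def eulerian : ℕ → ℕ → ℕ
  | 0, 0 => 1
  | 0, _ + 1 => 0
  | n + 1, 0 => eulerian n 0
  | n + 1, k + 1 => (k + 2) * eulerian n (k + 1) + (n - k) * eulerian n k

/-- The defining ideal `M + L` of the rational Chow ring of `X(m, n)`: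
the variable `X k` represents the divisor class `D_{k-m}`. -/
noncomputable def chowIdeal (m n : ℕ) : Ideal (MvPolynomial (Fin (m + n + 1)) ℚ) :=
  Ideal.span
    ({∏ k ∈ Finset.univ.filter (fun k : Fin (m + n + 1) => (k : ℕ) < m), X k,
      ∏ k ∈ Finset.univ.filter (fun k : Fin (m + n + 1) => m ≤ (k : ℕ)), X k} ∪
     { q | ∃ i : ℕ, 1 ≤ i ∧ i ≤ m + n - 1 ∧
        q = C (i : ℚ) * X ((0 : ℕ) : Fin (m + n + 1))
            - C ((i : ℚ) + 1) * X ((1 : ℕ) : Fin (m + n + 1))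
            + X ((i + 1 : ℕ) : Fin (m + n + 1)) })

/-- Key computation of Proposition 2.2: in the Chow ring of `X(m, n)`,
`(m+n-1)! · D_0^{m+n-1} = A(m+n-1, m-1) · D_{-m+1} ⋯ D_{-1} D_0 ⋯ D_{n-1}`
(the variable `X t` represents `D_{t-m}`). -/

lemma eulerian_eq_zero : ∀ n k : ℕ, n ≤ k → 1 ≤ k → eulerian n k = 0
  | 0, _ + 1, _, _ => rfl
  | n + 1, k + 1, h, _ => by
    have h1 : eulerian n (k + 1) = 0 := eulerian_eq_zero n (k + 1) (by omega) (by omega)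
    have h2 : n - k = 0 := by omega
    show (k + 2) * eulerian n (k + 1) + (n - k) * eulerian n k = 0
    rw [h1, h2]; ring

lemma sum_step {R : Type*} [CommRing R] (n : ℕ) (P : ℕ → R) :
    ∑ k ∈ range (n + 1 + 1), (eulerian (n + 1) k : R) * P k
      = ∑ k ∈ range (n + 1), (eulerian n k : R) *
          (((k : R) + 1) * P k + ((n : R) - (k : R)) * P (k + 1)) := by
  have hrec : ∀ k : ℕ, k ≤ n → (eulerian (n + 1) (k + 1) : R)
      = ((k : R) + 2) * (eulerian n (k + 1) : R) + ((n : R) - (k : R)) * (eulerian n k : R) := by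
    intro k hk
    show ((((k + 2) * eulerian n (k + 1) + (n - k) * eulerian n k : ℕ) : R)) = _
    push_cast [Nat.cast_sub hk]
    ring
  rw [Finset.sum_range_succ']
  have hRHS : ∑ k ∈ range (n + 1), (eulerian n k : R) *
        (((k : R) + 1) * P k + ((n : R) - (k : R)) * P (k + 1))
      = (∑ k ∈ range (n + 1), ((k : R) + 1) * (eulerian n k : R) * P k)
        + ∑ k ∈ range (n + 1), ((n : R) - (k : R)) * (eulerian n k : R) * P (k + 1) := by
    rw [← Finset.sum_add_distrib]
    exact Finset.sum_congr rfl fun k _ => by ring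
  rw [hRHS]
  have hL1 : ∑ k ∈ range (n + 1), (eulerian (n + 1) (k + 1) : R) * P (k + 1)
      = (∑ k ∈ range (n + 1), ((k : R) + 2) * (eulerian n (k + 1) : R) * P (k + 1))
        + ∑ k ∈ range (n + 1), ((n : R) - (k : R)) * (eulerian n k : R) * P (k + 1) := by
    rw [← Finset.sum_add_distrib]
    refine Finset.sum_congr rfl fun k hk => ?_
    rw [hrec k (by simpa using Nat.lt_succ_iff.mp (Finset.mem_range.mp hk))]
    ring
  rw [hL1]
  have hS1 : ∑ k ∈ range (n + 1), ((k : R) + 1) * (eulerian n k : R) * P k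
      = (∑ k ∈ range n, ((k : R) + 2) * (eulerian n (k + 1) : R) * P (k + 1))
        + ((0 : R) + 1) * (eulerian n 0 : R) * P 0 := by
    rw [Finset.sum_range_succ']
    congr 1
    · exact Finset.sum_congr rfl fun k _ => by push_cast; ring
    · push_cast; ring
  have hS2 : ∑ k ∈ range (n + 1), ((k : R) + 2) * (eulerian n (k + 1) : R) * P (k + 1)
      = ∑ k ∈ range n, ((k : R) + 2) * (eulerian n (k + 1) : R) * P (k + 1) := by
    rw [Finset.sum_range_succ, eulerian_eq_zero n (n + 1) (by omega) (by omega)]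
    simp
  have h0 : (eulerian (n + 1) 0 : R) = (eulerian n 0 : R) := by norm_cast
  rw [hS2, hS1, h0]
  push_cast
  ring

lemma worpitzky {R : Type*} [CommRing R] (a u : R) (c : ℤ) (n : ℕ) :
    (n.factorial : R) * (a + (c : R) * u) ^ n =
      ∑ k ∈ range (n + 1), (eulerian n k : R) *
        ∏ j ∈ range n, (a + ((c - (k : ℤ) + (j : ℤ) : ℤ) : R) * u) := by
  induction n with
  | zero => simp [eulerian]
  | succ n ih =>
    have key : ∀ k : ℕ, k ≤ n →
        ((n : R) + 1) * ((a + (c : R) * u) *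
            ∏ j ∈ range n, (a + ((c - (k : ℤ) + (j : ℤ) : ℤ) : R) * u))
        = ((k : R) + 1) * ∏ j ∈ range (n + 1), (a + ((c - (k : ℤ) + (j : ℤ) : ℤ) : R) * u)
          + ((n : R) - (k : R)) *
            ∏ j ∈ range (n + 1), (a + ((c - ((k + 1 : ℕ) : ℤ) + (j : ℤ) : ℤ) : R) * u) := by
      intro k hk
      have h1 : ∏ j ∈ range (n + 1), (a + ((c - (k : ℤ) + (j : ℤ) : ℤ) : R) * u)
          = (∏ j ∈ range n, (a + ((c - (k : ℤ) + (j : ℤ) : ℤ) : R) * u))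
            * (a + ((c - (k : ℤ) + (n : ℤ) : ℤ) : R) * u) := by
        rw [prod_range_succ]
      have h2 : ∏ j ∈ range (n + 1), (a + ((c - ((k + 1 : ℕ) : ℤ) + (j : ℤ) : ℤ) : R) * u)
          = (∏ j ∈ range n, (a + ((c - (k : ℤ) + (j : ℤ) : ℤ) : R) * u))
            * (a + ((c - (k : ℤ) - 1 : ℤ) : R) * u) := by
        rw [prod_range_succ']
        congr 1
        · exact prod_congr rfl fun j _ => by congr 2; push_cast; ring
        · congr 2; push_cast; ring
      rw [h1, h2]
      push_cast
      ring
    have fact : ((n + 1).factorial : R) * (a + (c : R) * u) ^ (n + 1)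
        = ((n : R) + 1) * ((a + (c : R) * u) * ((n.factorial : R) * (a + (c : R) * u) ^ n)) := by
      rw [Nat.factorial_succ]
      push_cast
      ring
    rw [fact, ih, Finset.mul_sum, Finset.mul_sum,
      sum_step n (fun k => ∏ j ∈ range (n + 1), (a + ((c - (k : ℤ) + (j : ℤ) : ℤ) : R) * u))]
    refine Finset.sum_congr rfl fun k hk => ?_
    have hk' : k ≤ n := Nat.lt_succ_iff.mp (Finset.mem_range.mp hk)
    have := key k hk'
    push_cast at this ⊢
    linear_combination (eulerian n k : R) * this

lemma abstract_key {R : Type*} [CommRing R] (m n : ℕ) (hm : 1 ≤ m) (hn : 1 ≤ n)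
    (a u : R) (L : ℤ → R) (hL : ∀ c : ℤ, L c = a + (c : R) * u)
    (h1 : ∏ t ∈ range m, L (t : ℤ) = 0)
    (h2 : ∏ t ∈ range (n + 1), L ((m : ℤ) + (t : ℤ)) = 0) :
    ((m + n - 1).factorial : R) * (L (m : ℤ)) ^ (m + n - 1)
      = (eulerian (m + n - 1) (m - 1) : R) * ∏ t ∈ Icc 1 (m + n - 1), L (t : ℤ) := by
  rw [hL, worpitzky a u (m : ℤ) (m + n - 1)]
  rw [Finset.sum_eq_single (m - 1)]
  · congr 1
    rw [← Finset.Ico_add_one_right_eq_Icc, Finset.prod_Ico_eq_prod_range]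
    refine Finset.prod_congr (by norm_num) fun j _ => ?_
    rw [hL]
    push_cast [Nat.cast_sub hm]
    ring
  · intro k hk hne
    rw [Finset.mem_range] at hk
    rcases lt_or_ge k m with hkm | hkm
    · -- k < m, k ≠ m - 1, so k + 1 < m : window contains [m, m+n]
      have hklt : k + 1 < m := by omega
      have hsub : Ico k (k + (n + 1)) ⊆ range (m + n - 1) := by
        intro x hx
        simp only [Finset.mem_Ico, Finset.mem_range] at *
        omega
      rw [← Finset.prod_sdiff hsub]
      have hz : ∏ j ∈ Ico k (k + (n + 1)),
          (a + (((m : ℤ) - (k : ℤ) + (j : ℤ) : ℤ) : R) * u) = 0 := by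
        rw [Finset.prod_Ico_eq_prod_range, Nat.add_sub_cancel_left, ← h2]
        refine Finset.prod_congr rfl fun t _ => ?_
        rw [hL]
        push_cast
        ring
      rw [hz, mul_zero, mul_zero]
    · -- k ≥ m : window contains [0, m-1]
      have hsub : Ico (k - m) k ⊆ range (m + n - 1) := by
        intro x hx
        simp only [Finset.mem_Ico, Finset.mem_range] at *
        omega
      rw [← Finset.prod_sdiff hsub]
      have hz : ∏ j ∈ Ico (k - m) k,
          (a + (((m : ℤ) - (k : ℤ) + (j : ℤ) : ℤ) : R) * u) = 0 := by
        rw [Finset.prod_Ico_eq_prod_range]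
        have he : k - (k - m) = m := by omega
        rw [he, ← h1]
        refine Finset.prod_congr rfl fun t _ => ?_
        rw [hL]
        push_cast [Nat.cast_sub hkm]
        ring
      rw [hz, mul_zero, mul_zero]
  · intro h
    exact absurd (Finset.mem_range.mpr (by omega)) h

theorem chow_top_degree (m n : ℕ) (hm : 1 ≤ m) (hn : 1 ≤ n) (hmn : 2 < m + n) :
    Ideal.Quotient.mk (chowIdeal m n)
        (C ((m + n - 1).factorial : ℚ) * X ((m : ℕ) : Fin (m + n + 1)) ^ (m + n - 1)) =
      Ideal.Quotient.mk (chowIdeal m n)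
        (C (eulerian (m + n - 1) (m - 1) : ℚ) *
          ∏ t ∈ Finset.Icc 1 (m + n - 1), X ((t : ℕ) : Fin (m + n + 1))) := by
  classical
  set π := Ideal.Quotient.mk (chowIdeal m n) with hπ
  set a : MvPolynomial (Fin (m + n + 1)) ℚ ⧸ chowIdeal m n := π (X ((0 : ℕ) : Fin (m + n + 1))) with ha
  set b : MvPolynomial (Fin (m + n + 1)) ℚ ⧸ chowIdeal m n := π (X ((1 : ℕ) : Fin (m + n + 1))) with hb
  set L : ℤ → MvPolynomial (Fin (m + n + 1)) ℚ ⧸ chowIdeal m n :=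
    fun c => a + (c : MvPolynomial (Fin (m + n + 1)) ℚ ⧸ chowIdeal m n) * (b - a) with hLdef
  have hL : ∀ c : ℤ, L c = a + (c : MvPolynomial (Fin (m + n + 1)) ℚ ⧸ chowIdeal m n) * (b - a) :=
    fun c => rfl
  -- every variable is an affine combination
  have hvar : ∀ j : ℕ, j ≤ m + n → π (X ((j : ℕ) : Fin (m + n + 1))) = L (j : ℤ) := by
    intro j hj
    match j with
    | 0 => rw [hL, ← ha]; push_cast; ring
    | 1 => rw [hL, ← hb]; push_cast; ring
    | (i + 2) =>
      have hq0 : (C (((i + 1 : ℕ) : ℚ)) * X ((0 : ℕ) : Fin (m + n + 1))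
          - C (((i + 1 : ℕ) : ℚ) + 1) * X ((1 : ℕ) : Fin (m + n + 1))
          + X (((i + 1) + 1 : ℕ) : Fin (m + n + 1))) ∈ chowIdeal m n := by
        apply Ideal.subset_span
        exact Or.inr ⟨i + 1, by omega, by omega, rfl⟩
      have hq := Ideal.Quotient.eq_zero_iff_mem.mpr hq0
      rw [← hπ, map_add, map_sub, map_mul, map_mul] at hq
      rw [show (((i + 1 : ℕ) : ℚ) + 1) = (((i + 2 : ℕ) : ℚ)) by push_cast; ring] at hq
      rw [map_natCast C, map_natCast C, map_natCast, map_natCast] at hq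
      rw [show ((i + 1) + 1 : ℕ) = (i + 2 : ℕ) from rfl] at hq
      rw [← ha, ← hb] at hq
      rw [hL]
      push_cast at hq ⊢
      linear_combination hq
  -- the two monomial generators
  have himg1 : Finset.image (fun t : ℕ => ((t : ℕ) : Fin (m + n + 1))) (range m)
      = Finset.univ.filter (fun k : Fin (m + n + 1) => (k : ℕ) < m) := by
    ext k
    simp only [Finset.mem_image, Finset.mem_range, Finset.mem_filter, Finset.mem_univ, true_and]
    constructor
    · rintro ⟨t, ht, rfl⟩
      rw [Fin.val_natCast, Nat.mod_eq_of_lt (by omega)]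
      exact ht
    · intro hk
      exact ⟨(k : ℕ), hk, Fin.cast_val_eq_self k⟩
  have himg2 : Finset.image (fun t : ℕ => ((m + t : ℕ) : Fin (m + n + 1))) (range (n + 1))
      = Finset.univ.filter (fun k : Fin (m + n + 1) => m ≤ (k : ℕ)) := by
    ext k
    simp only [Finset.mem_image, Finset.mem_range, Finset.mem_filter, Finset.mem_univ, true_and]
    constructor
    · rintro ⟨t, ht, rfl⟩
      rw [Fin.val_natCast, Nat.mod_eq_of_lt (by omega)]
      omega
    · intro hk
      refine ⟨(k : ℕ) - m, by omega, ?_⟩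
      rw [show m + ((k : ℕ) - m) = (k : ℕ) by omega]
      exact Fin.cast_val_eq_self k
  have h1 : ∏ t ∈ range m, L (t : ℤ) = 0 := by
    have hmem : (∏ k ∈ Finset.univ.filter (fun k : Fin (m + n + 1) => (k : ℕ) < m), X k)
        ∈ chowIdeal m n := Ideal.subset_span (Or.inl (Set.mem_insert _ _))
    have h0 := Ideal.Quotient.eq_zero_iff_mem.mpr hmem
    rw [← hπ, ← himg1, Finset.prod_image, map_prod] at h0
    · rw [← h0]
      exact Finset.prod_congr rfl fun t ht =>
        (hvar t (by simp only [Finset.mem_range] at ht; omega)).symm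
    · intro t1 h1' t2 h2' heq
      have := congrArg Fin.val heq
      rw [Fin.val_natCast, Fin.val_natCast] at this
      simp only [Finset.mem_range, Finset.mem_coe] at h1' h2'
      rwa [Nat.mod_eq_of_lt (by omega), Nat.mod_eq_of_lt (by omega)] at this
  have h2 : ∏ t ∈ range (n + 1), L ((m : ℤ) + (t : ℤ)) = 0 := by
    have hmem : (∏ k ∈ Finset.univ.filter (fun k : Fin (m + n + 1) => m ≤ (k : ℕ)), X k)
        ∈ chowIdeal m n :=
      Ideal.subset_span (Or.inl (Set.mem_insert_iff.mpr (Or.inr rfl)))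
    have h0 := Ideal.Quotient.eq_zero_iff_mem.mpr hmem
    rw [← hπ, ← himg2, Finset.prod_image, map_prod] at h0
    · rw [← h0]
      refine Finset.prod_congr rfl fun t ht => ?_
      rw [show (m : ℤ) + (t : ℤ) = ((m + t : ℕ) : ℤ) by push_cast; ring]
      exact (hvar (m + t) (by simp only [Finset.mem_range] at ht; omega)).symm
    · intro t1 h1' t2 h2' heq
      have := congrArg Fin.val heq
      rw [Fin.val_natCast, Fin.val_natCast] at this
      simp only [Finset.mem_range, Finset.mem_coe] at h1' h2'
      have e1 := Nat.mod_eq_of_lt (show m + t1 < m + n + 1 by omega)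
      have e2 := Nat.mod_eq_of_lt (show m + t2 < m + n + 1 by omega)
      rw [e1, e2] at this
      omega
  have key := abstract_key m n hm hn a (b - a) L hL h1 h2
  rw [map_mul, map_mul, map_pow]
  rw [show ((m + n - 1).factorial : ℚ) = (((m + n - 1).factorial : ℕ) : ℚ) from rfl,
    map_natCast C, map_natCast π]
  rw [show ((eulerian (m + n - 1) (m - 1) : ℕ) : ℚ) = (((eulerian (m + n - 1) (m - 1)) : ℕ) : ℚ) from rfl,
    map_natCast C, map_natCast π]
  rw [hvar m (by omega), map_prod]
  rw [key]
  congr 1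
  exact Finset.prod_congr rfl fun t ht => by
    rw [hvar t (by simp only [Finset.mem_Icc] at ht; omega)]
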